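/- One has lim_{j→∞} e·‖F_j‖_log / log(j+1) = 1, where ‖F_j‖_log = sup_{z∈𝔻} (1−|z|)·log(3/(1−|z|))·j·|z|^{j−1} is the log-Bloch seminorm of the monomial F_j(z) = z^j. -/

import Mathlib

open Filter Real

private lemma aux_ue (u : ℝ) : u * Real.exp (-u) ≤ Real.exp (-1) := by
  have h : u ≤ Real.exp (u - 1) := by nlinarith [Real.add_one_le_exp (u - 1)]
  calc u * Real.exp (-u) ≤ Real.exp (u - 1) * Real.exp (-u) :=
        mul_le_mul_of_nonneg_right h (Real.exp_pos _).le
    _ = Real.exp (-1) := by rw [← Real.exp_add]; ring_nf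

private lemma aux_ulog (u : ℝ) (hu : 0 < u) :
    u * Real.exp (-u) * (-Real.log u) ≤ Real.exp (-1) := by
  rcases le_or_gt 1 u with h | h
  · have h1 : 0 ≤ Real.log u := Real.log_nonneg h
    have h2 : 0 ≤ u * Real.exp (-u) := by positivity
    nlinarith [Real.exp_pos (-1:ℝ)]
  · have hln : 0 ≤ -Real.log u := by
      have := Real.log_neg hu h; linarith
    have h1 : -Real.log u ≤ (1/u) * Real.exp (-1) := by
      have h2 := Real.log_le_sub_one_of_pos (show 0 < (1/u) * Real.exp (-1) by positivity)
      rw [Real.log_mul (by positivity) (Real.exp_pos _).ne', Real.log_exp, Real.log_div one_ne_zero hu.ne', Real.log_one] at h2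
      linarith
    have hE : Real.exp (-u) ≤ 1 := by
      have := Real.exp_le_exp.mpr (show -u ≤ (0:ℝ) by linarith)
      simpa using this
    calc u * Real.exp (-u) * (-Real.log u) ≤ u * 1 * (-Real.log u) := by
          apply mul_le_mul_of_nonneg_right _ hln
          exact mul_le_mul_of_nonneg_left hE hu.le
      _ ≤ u * ((1/u) * Real.exp (-1)) := by
          rw [mul_one]; exact mul_le_mul_of_nonneg_left h1 hu.le
      _ = Real.exp (-1) := by field_simp

private lemma aux_upper (j : ℕ) (hj : 2 ≤ j) (r : ℝ) (hr0 : 0 ≤ r) (hr1 : r < 1) :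
    (1 - r) * Real.log (3 / (1 - r)) * (j : ℝ) * r ^ (j - 1) ≤
      (j : ℝ) / ((j : ℝ) - 1) * (Real.log (3 * ((j : ℝ) - 1)) + 1) * Real.exp (-1) := by
  have hj1 : (1:ℕ) ≤ j := by omega
  have hjr : (2:ℝ) ≤ (j:ℝ) := by exact_mod_cast hj
  have ht0 : 0 < 1 - r := by linarith
  have ht1 : 1 - r ≤ 1 := by linarith
  have hm0 : (0:ℝ) < (j:ℝ) - 1 := by linarith
  have hu0 : (0:ℝ) < ((j:ℝ) - 1) * (1 - r) := mul_pos hm0 ht0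
  have hcast : ((j - 1 : ℕ) : ℝ) = (j:ℝ) - 1 := by
    rw [Nat.cast_sub hj1]; simp
  have hrexp : r ≤ Real.exp (-(1 - r)) := by
    have := Real.add_one_le_exp (-(1 - r)); linarith
  have hpow : r ^ (j - 1) ≤ Real.exp (-(((j:ℝ) - 1) * (1 - r))) := by
    calc r ^ (j-1) ≤ Real.exp (-(1 - r)) ^ (j-1) := pow_le_pow_left₀ hr0 hrexp _
      _ = Real.exp (((j-1:ℕ):ℝ) * (-(1 - r))) := (Real.exp_nat_mul _ _).symm
      _ = Real.exp (-(((j:ℝ) - 1) * (1 - r))) := by rw [hcast]; ring_nf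
  have hlog : Real.log (3 / (1 - r))
      = Real.log (3 * ((j:ℝ) - 1)) - Real.log (((j:ℝ) - 1) * (1 - r)) := by
    have h3 : (3:ℝ) / (1 - r) = (3 * ((j:ℝ) - 1)) / (((j:ℝ) - 1) * (1 - r)) := by
      field_simp
    rw [h3, Real.log_div (by positivity) hu0.ne']
  have hlognn : 0 ≤ Real.log (3 / (1 - r)) := Real.log_nonneg (by
    rw [le_div_iff₀ ht0]; linarith)
  have h3m : 0 ≤ Real.log (3 * ((j:ℝ) - 1)) := Real.log_nonneg (by nlinarith)
  have step1 : (1 - r) * Real.log (3 / (1 - r)) * (j:ℝ) * r ^ (j-1)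
      ≤ (1 - r) * Real.log (3 / (1 - r)) * (j:ℝ) * Real.exp (-(((j:ℝ) - 1) * (1 - r))) := by
    have hnn : 0 ≤ (1 - r) * Real.log (3/(1 - r)) * (j:ℝ) := by positivity
    exact mul_le_mul_of_nonneg_left hpow hnn
  have step2 : (1 - r) * Real.log (3/(1 - r)) * (j:ℝ) * Real.exp (-(((j:ℝ) - 1) * (1 - r)))
      = ((j:ℝ)/((j:ℝ) - 1)) *
        ((((j:ℝ) - 1) * (1 - r)) * Real.exp (-(((j:ℝ) - 1) * (1 - r))) * Real.log (3 * ((j:ℝ) - 1))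
          + (((j:ℝ) - 1) * (1 - r)) * Real.exp (-(((j:ℝ) - 1) * (1 - r))) * (-Real.log (((j:ℝ) - 1) * (1 - r)))) := by
    rw [hlog]; field_simp; ring
  have step3 : (((j:ℝ) - 1) * (1 - r)) * Real.exp (-(((j:ℝ) - 1) * (1 - r))) * Real.log (3 * ((j:ℝ) - 1))
          + (((j:ℝ) - 1) * (1 - r)) * Real.exp (-(((j:ℝ) - 1) * (1 - r))) * (-Real.log (((j:ℝ) - 1) * (1 - r)))
      ≤ Real.exp (-1) * Real.log (3 * ((j:ℝ) - 1)) + Real.exp (-1) := by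
    gcongr ?_ + ?_
    · exact mul_le_mul_of_nonneg_right (aux_ue _) h3m
    · exact aux_ulog _ hu0
  have hq : (0:ℝ) ≤ (j:ℝ)/((j:ℝ) - 1) := by positivity
  calc (1 - r) * Real.log (3 / (1 - r)) * (j:ℝ) * r ^ (j-1)
      ≤ (1 - r) * Real.log (3 / (1 - r)) * (j:ℝ) * Real.exp (-(((j:ℝ) - 1) * (1 - r))) := step1
    _ = _ := step2
    _ ≤ ((j:ℝ)/((j:ℝ) - 1)) * (Real.exp (-1) * Real.log (3 * ((j:ℝ) - 1)) + Real.exp (-1)) :=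
        mul_le_mul_of_nonneg_left step3 hq
    _ = (j : ℝ) / ((j : ℝ) - 1) * (Real.log (3 * ((j : ℝ) - 1)) + 1) * Real.exp (-1) := by ring

private lemma aux_lower (j : ℕ) (hj : 2 ≤ j) :
    Real.log (3 * (j:ℝ)) * Real.exp (-1) ≤
      (1 - (1 - 1/(j:ℝ))) * Real.log (3 / (1 - (1 - 1/(j:ℝ)))) * (j:ℝ) * (1 - 1/(j:ℝ)) ^ (j - 1) := by
  have hjr : (2:ℝ) ≤ (j:ℝ) := by exact_mod_cast hj
  have hj0 : (0:ℝ) < (j:ℝ) := by linarith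
  have hr0 : (0:ℝ) < 1 - 1/(j:ℝ) := by
    have h1 : 1/(j:ℝ) ≤ 1/2 := by
      apply one_div_le_one_div_of_le <;> linarith
    linarith
  have hncast : ((j - 1 : ℕ):ℝ) = (j:ℝ) - 1 := by
    rw [Nat.cast_sub (by omega)]; simp
  have hnpos : (0:ℝ) < ((j - 1 : ℕ):ℝ) := by rw [hncast]; linarith
  have hexp1 : Real.exp (-(1/((j - 1 : ℕ):ℝ))) ≤ 1 - 1/(j:ℝ) := by
    have hkey : Real.exp (-(1/((j - 1 : ℕ):ℝ))) * Real.exp (1/((j - 1 : ℕ):ℝ)) = 1 := by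
      rw [← Real.exp_add]; simp
    have hge := Real.add_one_le_exp (1/((j - 1 : ℕ):ℝ))
    have hm0' : (j:ℝ) - 1 ≠ 0 := by linarith
    have hid : (1 - 1/(j:ℝ)) * (1/((j - 1 : ℕ):ℝ) + 1) = 1 := by
      rw [hncast]; field_simp; ring
    nlinarith [Real.exp_pos (-(1/((j - 1 : ℕ):ℝ))), Real.exp_pos (1/((j - 1 : ℕ):ℝ))]
  have hexp : Real.exp (-1) ≤ (1 - 1/(j:ℝ)) ^ (j - 1) := by
    have h1 : Real.exp (-1:ℝ) = Real.exp (-(1/((j - 1 : ℕ):ℝ))) ^ (j - 1) := by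
      rw [← Real.exp_nat_mul]; congr 1
      rw [hncast]
      field_simp
      rw [div_self (by linarith : (j:ℝ) - 1 ≠ 0)]
    rw [h1]
    exact pow_le_pow_left₀ (Real.exp_pos _).le hexp1 _
  have hlognn : 0 ≤ Real.log (3 * (j:ℝ)) := Real.log_nonneg (by nlinarith)
  have hsimp : 1 - (1 - 1/(j:ℝ)) = 1/(j:ℝ) := by ring
  rw [hsimp]
  have h2 : Real.log (3 / (1/(j:ℝ))) = Real.log (3 * (j:ℝ)) := by
    congr 1; field_simp
  rw [h2]
  calc Real.log (3*(j:ℝ)) * Real.exp (-1)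
      ≤ Real.log (3*(j:ℝ)) * (1 - 1/(j:ℝ)) ^ (j - 1) :=
        mul_le_mul_of_nonneg_left hexp hlognn
    _ = (1/(j:ℝ)) * Real.log (3*(j:ℝ)) * (j:ℝ) * (1 - 1/(j:ℝ)) ^ (j - 1) := by
        field_simp

private lemma aux_S (j : ℕ) (hj : 2 ≤ j) :
    Real.log (3 * (j:ℝ)) * Real.exp (-1) ≤
      sSup ((fun z : ℂ => (1 - ‖z‖) * Real.log (3 / (1 - ‖z‖)) *
          (j : ℝ) * ‖z‖ ^ (j - 1)) '' Metric.ball (0 : ℂ) 1) ∧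
    sSup ((fun z : ℂ => (1 - ‖z‖) * Real.log (3 / (1 - ‖z‖)) *
          (j : ℝ) * ‖z‖ ^ (j - 1)) '' Metric.ball (0 : ℂ) 1) ≤
      (j : ℝ) / ((j : ℝ) - 1) * (Real.log (3 * ((j : ℝ) - 1)) + 1) * Real.exp (-1) := by
  set f : ℂ → ℝ := fun z => (1 - ‖z‖) * Real.log (3 / (1 - ‖z‖)) *
      (j : ℝ) * ‖z‖ ^ (j - 1) with hf
  have hub : ∀ x ∈ f '' Metric.ball (0:ℂ) 1,
      x ≤ (j:ℝ)/((j:ℝ)-1) * (Real.log (3*((j:ℝ)-1)) + 1) * Real.exp (-1) := by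
    rintro x ⟨z, hz, rfl⟩
    have hz1 : ‖z‖ < 1 := by
      simpa [Complex.dist_eq] using Metric.mem_ball.mp hz
    exact aux_upper j hj _ (norm_nonneg z) hz1
  have hbdd : BddAbove (f '' Metric.ball (0:ℂ) 1) := ⟨_, hub⟩
  have hne : (f '' Metric.ball (0:ℂ) 1).Nonempty :=
    ⟨f 0, Set.mem_image_of_mem f (Metric.mem_ball_self one_pos)⟩
  constructor
  · have hjr : (2:ℝ) ≤ (j:ℝ) := by exact_mod_cast hj
    have hr0 : (0:ℝ) < 1 - 1/(j:ℝ) := by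
      have h1 : 1/(j:ℝ) ≤ 1/2 := by
        apply one_div_le_one_div_of_le <;> linarith
      linarith
    have habs : ‖((1 - 1/(j:ℝ) : ℝ) : ℂ)‖ = 1 - 1/(j:ℝ) := by
      rw [Complex.norm_real, Real.norm_of_nonneg hr0.le]
    have hmem : ((1 - 1/(j:ℝ) : ℝ) : ℂ) ∈ Metric.ball (0:ℂ) 1 := by
      rw [Metric.mem_ball, Complex.dist_eq, sub_zero, habs]
      have : 0 < 1/(j:ℝ) := by positivity
      linarith
    have hle := le_csSup hbdd (Set.mem_image_of_mem f hmem)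
    have hfeq : f ((1 - 1/(j:ℝ) : ℝ) : ℂ)
        = (1 - (1 - 1/(j:ℝ))) * Real.log (3 / (1 - (1 - 1/(j:ℝ)))) * (j:ℝ)
          * (1 - 1/(j:ℝ)) ^ (j - 1) := by
      rw [hf]; simp only [habs]
    rw [hfeq] at hle
    exact (aux_lower j hj).trans hle
  · exact csSup_le hne hub


/-- One has `lim_(j→∞) e * ‖F_j‖_log / log (j+1) = 1`, where
`‖F_j‖_log = sup_(z ∈ 𝔻) (1-|z|) * log (3/(1-|z|)) * j * |z|^(j-1)` is the
log-Bloch seminorm of the monomial `F_j z = z^j`. -/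
theorem stmt_8 :
    Filter.Tendsto
      (fun j : ℕ => Real.exp 1 *
        sSup ((fun z : ℂ => (1 - ‖z‖) * Real.log (3 / (1 - ‖z‖)) *
          (j : ℝ) * ‖z‖ ^ (j - 1)) '' Metric.ball (0 : ℂ) 1) /
        Real.log ((j : ℝ) + 1))
      Filter.atTop (nhds 1) := by

  have hlog_atTop : Tendsto (fun j : ℕ => Real.log ((j:ℝ)+1)) atTop atTop :=
    Real.tendsto_log_atTop.comp (tendsto_atTop_add_const_right _ 1 tendsto_natCast_atTop_atTop)
  have hlim1 : Tendsto (fun j : ℕ => (j:ℝ)/((j:ℝ)-1)) atTop (nhds 1) := by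
    have h0 : Tendsto (fun j : ℕ => 1 + ((j:ℝ) + (-1))⁻¹) atTop (nhds 1) := by
      have h := tendsto_inv_atTop_zero.comp
        (tendsto_atTop_add_const_right atTop (-1 : ℝ) (tendsto_natCast_atTop_atTop (R := ℝ)))
      simpa using (tendsto_const_nhds (x := (1:ℝ)) (f := atTop)).add h
    refine Filter.Tendsto.congr' ?_ h0
    filter_upwards [eventually_ge_atTop 2] with j hj
    have hjr : (2:ℝ) ≤ (j:ℝ) := by exact_mod_cast hj
    have h1 : (j:ℝ) - 1 ≠ 0 := by linarith
    rw [← sub_eq_add_neg]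
    field_simp
    ring
  have hratio : Tendsto (fun j : ℕ => ((j:ℝ)-1)/((j:ℝ)+1)) atTop (nhds 1) := by
    have h0 : Tendsto (fun j : ℕ => 1 - 2 * ((j:ℝ) + 1)⁻¹) atTop (nhds 1) := by
      have h := tendsto_inv_atTop_zero.comp
        (tendsto_atTop_add_const_right atTop (1 : ℝ) (tendsto_natCast_atTop_atTop (R := ℝ)))
      have h2 := h.const_mul (2:ℝ)
      simpa using (tendsto_const_nhds (x := (1:ℝ)) (f := atTop)).sub h2
    refine Filter.Tendsto.congr' ?_ h0
    filter_upwards [eventually_ge_atTop 1] with j hj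
    have h1 : (j:ℝ) + 1 ≠ 0 := by positivity
    field_simp
    ring
  have hlim2 : Tendsto (fun j : ℕ =>
      (Real.log (3*((j:ℝ)-1)) + 1) / Real.log ((j:ℝ)+1)) atTop (nhds 1) := by
    have hc : Tendsto (fun j : ℕ => Real.log (((j:ℝ)-1)/((j:ℝ)+1))) atTop (nhds 0) := by
      have := (Real.continuousAt_log one_ne_zero).tendsto.comp hratio
      simpa [Function.comp_def] using this
    have hnum : Tendsto (fun j : ℕ => Real.log 3 + 1 + Real.log (((j:ℝ)-1)/((j:ℝ)+1)))
        atTop (nhds (Real.log 3 + 1)) := by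
      simpa using (tendsto_const_nhds (x := Real.log 3 + 1) (f := atTop)).add hc
    have hdiv := hnum.div_atTop hlog_atTop
    have h0 : Tendsto (fun j : ℕ => 1 +
        (Real.log 3 + 1 + Real.log (((j:ℝ)-1)/((j:ℝ)+1))) / Real.log ((j:ℝ)+1))
        atTop (nhds 1) := by
      simpa using (tendsto_const_nhds (x := (1:ℝ)) (f := atTop)).add hdiv
    refine Filter.Tendsto.congr' ?_ h0
    filter_upwards [eventually_ge_atTop 2] with j hj
    have hjr : (2:ℝ) ≤ (j:ℝ) := by exact_mod_cast hj
    have hm0 : (0:ℝ) < (j:ℝ) - 1 := by linarith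
    have hp0 : (0:ℝ) < (j:ℝ) + 1 := by linarith
    have hlp : 0 < Real.log ((j:ℝ)+1) := Real.log_pos (by linarith)
    have e1 : Real.log (3*((j:ℝ)-1)) = Real.log 3 + Real.log ((j:ℝ)-1) :=
      Real.log_mul (by norm_num) hm0.ne'
    have e2 : Real.log (((j:ℝ)-1)/((j:ℝ)+1)) = Real.log ((j:ℝ)-1) - Real.log ((j:ℝ)+1) :=
      Real.log_div hm0.ne' hp0.ne'
    rw [e1, e2]
    field_simp
    ring
  have hb : Tendsto (fun j : ℕ => ((j:ℝ)/((j:ℝ)-1)) *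
      ((Real.log (3*((j:ℝ)-1)) + 1) / Real.log ((j:ℝ)+1))) atTop (nhds 1) := by
    simpa using hlim1.mul hlim2
  refine tendsto_of_tendsto_of_tendsto_of_le_of_le'
    (tendsto_const_nhds (x := (1:ℝ)) (f := atTop)) hb ?_ ?_
  · filter_upwards [eventually_ge_atTop 2] with j hj
    obtain ⟨hlow, -⟩ := aux_S j hj
    have hjr : (2:ℝ) ≤ (j:ℝ) := by exact_mod_cast hj
    have hlp : 0 < Real.log ((j:ℝ)+1) := Real.log_pos (by linarith)
    have hee : Real.exp 1 * Real.exp (-1) = 1 := by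
      rw [← Real.exp_add]; norm_num
    have h1 : Real.log ((j:ℝ)+1) ≤ Real.log (3*(j:ℝ)) :=
      Real.log_le_log (by linarith) (by linarith)
    rw [le_div_iff₀ hlp, one_mul]
    calc Real.log ((j:ℝ)+1) ≤ Real.log (3*(j:ℝ)) := h1
      _ = Real.exp 1 * (Real.log (3*(j:ℝ)) * Real.exp (-1)) := by
          linear_combination (-Real.log (3*(j:ℝ))) * hee
      _ ≤ _ := mul_le_mul_of_nonneg_left hlow (Real.exp_pos 1).le
  · filter_upwards [eventually_ge_atTop 2] with j hj
    obtain ⟨-, hhigh⟩ := aux_S j hj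
    have hjr : (2:ℝ) ≤ (j:ℝ) := by exact_mod_cast hj
    have hlp : 0 < Real.log ((j:ℝ)+1) := Real.log_pos (by linarith)
    have hee : Real.exp 1 * Real.exp (-1) = 1 := by
      rw [← Real.exp_add]; norm_num
    rw [div_le_iff₀ hlp]
    calc Real.exp 1 * sSup ((fun z : ℂ => (1 - ‖z‖) *
          Real.log (3 / (1 - ‖z‖)) * (j : ℝ) * ‖z‖ ^ (j - 1))
            '' Metric.ball (0 : ℂ) 1)
        ≤ Real.exp 1 * ((j:ℝ)/((j:ℝ)-1) * (Real.log (3*((j:ℝ)-1)) + 1) * Real.exp (-1)) :=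
          mul_le_mul_of_nonneg_left hhigh (Real.exp_pos 1).le
      _ = (j:ℝ)/((j:ℝ)-1) * (Real.log (3*((j:ℝ)-1)) + 1) := by
          linear_combination ((j:ℝ)/((j:ℝ)-1) * (Real.log (3*((j:ℝ)-1)) + 1)) * hee
      _ = (j:ℝ)/((j:ℝ)-1) * ((Real.log (3*((j:ℝ)-1)) + 1) / Real.log ((j:ℝ)+1))
            * Real.log ((j:ℝ)+1) := by
          field_simp
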